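/- Let f, h be probability densities on ℝ with finite first moments. Then for every N ≥ 1, d_{T1,N}(f^{⊗N}, h^{⊗N}) ≤ √N · d_{T1,1}(f, h). Moreover the √N dependence is optimal when the means differ: if m_f = ∫ v f(v) dv and m_h = ∫ v h(v) dv, then d_{T1,N}(f^{⊗N}, h^{⊗N}) ≥ √N · |m_f − m_h|. -/

import Mathlib

open MeasureTheory Real Finset

noncomputable section

/-- The state space of `N` one-dimensional velocities. -/
abbrev V (N : ℕ) := Fin N → ℝ

/-- A probability density on `ℝ^N`. -/
def IsProbDensity {N : ℕ} (F : V N → ℝ) : Prop :=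
  (∀ v, 0 ≤ F v) ∧ Integrable F ∧ ∫ v, F v = 1

/-- A probability density on `ℝ`. -/
def IsProbDensity1 (g : ℝ → ℝ) : Prop :=
  (∀ x, 0 ≤ g x) ∧ Integrable g ∧ ∫ x, g x = 1

/-- The velocity vector after the Kac collision of particles `i` and `j` with angle `θ`. -/
def collide {N : ℕ} (v : V N) (i j : Fin N) (θ : ℝ) : V N :=
  Function.update (Function.update v i (v i * Real.cos θ + v j * Real.sin θ)) j
    (-(v i) * Real.sin θ + v j * Real.cos θ)

/-- Kac's collision operator `Q`. -/
def QOp {N : ℕ} (F : V N → ℝ) : V N → ℝ := fun v =>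
  (N.choose 2 : ℝ)⁻¹ * ∑ i : Fin N, ∑ j : Fin N,
    if i < j then (2 * π)⁻¹ * ∫ θ in (0:ℝ)..(2 * π), F (collide v i j θ) else 0

/-- The thermostat operator `R_j` with reservoir distribution `g`. -/
def ROp {N : ℕ} (g : ℝ → ℝ) (j : Fin N) (F : V N → ℝ) : V N → ℝ := fun v =>
  ∫ w : ℝ, (2 * π)⁻¹ * ∫ θ in (0:ℝ)..(2 * π),
    g (w * Real.cos θ - v j * Real.sin θ) *
      F (Function.update v j (v j * Real.cos θ + w * Real.sin θ))

/-- The fixed point operator `Φ = γ Q + (1-γ) (1/N) ∑ⱼ Rⱼ`. -/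
def PhiOp {N : ℕ} (γ : ℝ) (g : ℝ → ℝ) (F : V N → ℝ) : V N → ℝ := fun v =>
  γ * QOp F v + (1 - γ) * (N : ℝ)⁻¹ * ∑ j : Fin N, ROp g j F v

/-- Fourier transform of a density on `ℝ^N`. -/
def ft {N : ℕ} (f : V N → ℝ) (ξ : V N) : ℂ :=
  ∫ v : V N, (f v : ℂ) * Complex.exp (-Complex.I * ((∑ i, v i * ξ i : ℝ) : ℂ))

/-- Fourier transform of a density on `ℝ`. -/
def ft1 (f : ℝ → ℝ) (ξ : ℝ) : ℂ :=
  ∫ v : ℝ, (f v : ℂ) * Complex.exp (-Complex.I * ((v * ξ : ℝ) : ℂ))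

/-- The Gabetta–Toscani–Wennberg distance on `ℝ^N`. -/
def dGTW {N : ℕ} (f h : V N → ℝ) : ℝ :=
  ⨆ ξ : {ξ : V N // ξ ≠ 0}, ‖ft f ξ.1 - ft h ξ.1‖ / (∑ i, (ξ.1 i) ^ 2)

/-- The `T1` distance on `ℝ^N`. -/
def dT1 {N : ℕ} (f h : V N → ℝ) : ℝ :=
  ⨆ ξ : {ξ : V N // ξ ≠ 0}, ‖ft f ξ.1 - ft h ξ.1‖ / Real.sqrt (∑ i, (ξ.1 i) ^ 2)

/-- The Gabetta–Toscani–Wennberg distance on `ℝ`. -/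
def dGTW1 (f h : ℝ → ℝ) : ℝ :=
  ⨆ ξ : {ξ : ℝ // ξ ≠ 0}, ‖ft1 f ξ.1 - ft1 h ξ.1‖ / (ξ.1) ^ 2

/-- The `T1` distance on `ℝ`. -/
def dT11 (f h : ℝ → ℝ) : ℝ :=
  ⨆ ξ : {ξ : ℝ // ξ ≠ 0}, ‖ft1 f ξ.1 - ft1 h ξ.1‖ / |ξ.1|

/-- `F : ℝ → V N → ℝ` is a solution of the coupled Kac master equation
`∂ₜ F = -λN(I-Q)[F] - μ ∑ⱼ (I-Rⱼ)[F]`. -/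
def IsSolution {N : ℕ} (lam mu : ℝ) (g : ℝ → ℝ) (F : ℝ → V N → ℝ) : Prop :=
  (∀ t, IsProbDensity (F t)) ∧
    ∀ t v, HasDerivAt (fun s => F s v)
      (-(lam * N) * (F t v - QOp (F t) v) - mu * ∑ j : Fin N, (F t v - ROp g j (F t) v)) t

/-- `N`-fold tensor power of a density on `ℝ`. -/
def tensorPow (f : ℝ → ℝ) (N : ℕ) : V N → ℝ := fun v => ∏ i, f (v i)

/-- First marginal of a density on `ℝ^N`. -/
def marg1 {N : ℕ} (F : V N → ℝ) : ℝ → ℝ := fun x =>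
  ∫ w : V (N - 1),
    F (fun i => if h : (i : ℕ) = 0 then x else w ⟨(i : ℕ) - 1, by have := i.isLt; omega⟩)

/-- The `k`-th marginal of a density on `ℝ^N`. -/
def marg {N : ℕ} (k : ℕ) (F : V N → ℝ) : V k → ℝ := fun u =>
  ∫ w : V (N - k),
    F (fun i => if h : (i : ℕ) < k then u ⟨(i : ℕ), h⟩
        else w ⟨(i : ℕ) - k, by have := i.isLt; omega⟩)

/-- A density symmetric under permutations of the variables. -/
def IsSymmetric {N : ℕ} (F : V N → ℝ) : Prop :=
  ∀ σ : Equiv.Perm (Fin N), ∀ v : V N, F (v ∘ σ) = F v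

/-- `π` is a coupling of `μ` and `ν`. -/
def Coupling {α β : Type*} [MeasurableSpace α] [MeasurableSpace β]
    (γ : Measure (α × β)) (μ : Measure α) (ν : Measure β) : Prop :=
  γ.map Prod.fst = μ ∧ γ.map Prod.snd = ν

/-- Wasserstein-2 distance between measures on `ℝ^N` (Euclidean cost). -/
def W2 {N : ℕ} (μ ν : Measure (V N)) : ℝ :=
  sInf {c | ∃ γ : Measure (V N × V N), Coupling γ μ ν ∧
    c = Real.sqrt (∫ p, ∑ i, (p.1 i - p.2 i) ^ 2 ∂γ)}

/-- Wasserstein-2 distance between measures on `ℝ`. -/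
def W2r (μ ν : Measure ℝ) : ℝ :=
  sInf {c | ∃ γ : Measure (ℝ × ℝ), Coupling γ μ ν ∧
    c = Real.sqrt (∫ p, (p.1 - p.2) ^ 2 ∂γ)}

/-- The measure on `ℝ^N` with density `F`. -/
def densMeasure {N : ℕ} (F : V N → ℝ) : Measure (V N) :=
  volume.withDensity fun v => ENNReal.ofReal (F v)

/-- The measure on `ℝ` with density `f`. -/
def densMeasure1 (f : ℝ → ℝ) : Measure ℝ :=
  volume.withDensity fun x => ENNReal.ofReal (f x)

open Topology

lemma aux_norm_exp (r : ℝ) : ‖Complex.exp (-Complex.I * (r : ℂ))‖ = 1 := by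
  rw [Complex.norm_exp]
  simp

lemma aux_norm_exp_sub_one (r : ℝ) :
    ‖Complex.exp (-Complex.I * (r : ℂ)) - 1‖ ≤ |r| := by
  have h1 : -Complex.I * (r : ℂ) = ((-r : ℝ) : ℂ) * Complex.I := by push_cast; ring
  rw [h1, Complex.exp_mul_I]
  have h2 : Complex.cos ((-r : ℝ) : ℂ) + Complex.sin ((-r : ℝ) : ℂ) * Complex.I - 1
      = ((Real.cos (-r) - 1 : ℝ) : ℂ) + ((Real.sin (-r) : ℝ) : ℂ) * Complex.I := by
    rw [← Complex.ofReal_cos, ← Complex.ofReal_sin]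
    push_cast
    ring
  rw [h2, Complex.norm_add_mul_I]
  have hc : (Real.cos (-r) - 1) ^ 2 + Real.sin (-r) ^ 2 = 4 * ((1 - Real.cos r) / 2) := by
    have := Real.sin_sq_add_cos_sq (-r)
    rw [Real.cos_neg] at *
    nlinarith
  rw [hc, show (4 : ℝ) = 2 ^ 2 by norm_num, Real.sqrt_mul (by positivity),
    Real.sqrt_sq (by norm_num), ← Real.abs_sin_half]
  calc 2 * |Real.sin (r / 2)| ≤ 2 * |r / 2| := by
        have := Real.abs_sin_le_abs (x := r / 2)
        linarith
    _ = |r| := by rw [abs_div]; rw [abs_of_nonneg (by norm_num : (0:ℝ) ≤ 2)]; ring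

lemma aux_ft1_integrand_integrable {g : ℝ → ℝ} (hg : IsProbDensity1 g) (ξ : ℝ) :
    Integrable (fun v : ℝ => (g v : ℂ) * Complex.exp (-Complex.I * ((v * ξ : ℝ) : ℂ))) := by
  have hm : AEStronglyMeasurable
      (fun v : ℝ => (g v : ℂ) * Complex.exp (-Complex.I * ((v * ξ : ℝ) : ℂ))) volume := by
    exact (Complex.continuous_ofReal.comp_aestronglyMeasurable
      hg.2.1.aestronglyMeasurable).mul (Continuous.aestronglyMeasurable (by continuity))
  refine hg.2.1.mono' hm (Filter.Eventually.of_forall fun v => ?_)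
  rw [norm_mul, aux_norm_exp, mul_one, Complex.norm_real, Real.norm_eq_abs,
    abs_of_nonneg (hg.1 v)]

lemma aux_norm_ft1_le_one {g : ℝ → ℝ} (hg : IsProbDensity1 g) (ξ : ℝ) :
    ‖ft1 g ξ‖ ≤ 1 := by
  rw [ft1, ← hg.2.2]
  refine norm_integral_le_of_norm_le hg.2.1 (Filter.Eventually.of_forall fun v => ?_)
  rw [norm_mul, aux_norm_exp, mul_one, Complex.norm_real, Real.norm_eq_abs,
    abs_of_nonneg (hg.1 v)]

lemma aux_ft1_zero {g : ℝ → ℝ} (hg : IsProbDensity1 g) : ft1 g 0 = 1 := by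
  rw [ft1]
  simp only [mul_zero, Complex.ofReal_zero, Complex.exp_zero, mul_one]
  rw [show (1 : ℂ) = ((1 : ℝ) : ℂ) by norm_num, ← hg.2.2]
  exact integral_ofReal

lemma aux_ft1_sub_one {g : ℝ → ℝ} (hg : IsProbDensity1 g)
    (hg1 : Integrable fun x => x * g x) (ξ : ℝ) :
    ‖ft1 g ξ - 1‖ ≤ (∫ x, |x * g x|) * |ξ| := by
  have hgC : Integrable (fun v : ℝ => (g v : ℂ)) := hg.2.1.ofReal
  have h2 : (∫ v : ℝ, (g v : ℂ)) = 1 := by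
    rw [show (1 : ℂ) = ((1 : ℝ) : ℂ) by norm_num, ← hg.2.2]
    exact integral_ofReal
  have h3 : (∫ v : ℝ, (g v : ℂ) * (Complex.exp (-Complex.I * ((v * ξ : ℝ) : ℂ)) - 1))
      = (∫ v : ℝ, (g v : ℂ) * Complex.exp (-Complex.I * ((v * ξ : ℝ) : ℂ)))
        - ∫ v : ℝ, (g v : ℂ) := by
    rw [← integral_sub (aux_ft1_integrand_integrable hg ξ) hgC]
    congr 1
    ext v
    ring
  have h1 : ft1 g ξ - 1
      = ∫ v : ℝ, (g v : ℂ) * (Complex.exp (-Complex.I * ((v * ξ : ℝ) : ℂ)) - 1) := by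
    rw [ft1, h3, h2]
  rw [h1, ← integral_mul_const]
  refine norm_integral_le_of_norm_le (hg1.abs.mul_const |ξ|)
    (Filter.Eventually.of_forall fun v => ?_)
  rw [norm_mul, Complex.norm_real, Real.norm_eq_abs, abs_of_nonneg (hg.1 v)]
  calc g v * ‖Complex.exp (-Complex.I * ((v * ξ : ℝ) : ℂ)) - 1‖
      ≤ g v * |v * ξ| := by
        exact mul_le_mul_of_nonneg_left (aux_norm_exp_sub_one _) (hg.1 v)
    _ = |v * g v| * |ξ| := by
        rw [abs_mul, abs_mul, abs_of_nonneg (hg.1 v)]; ring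

lemma aux_ft_tensorPow {N : ℕ} (g : ℝ → ℝ) (ξ : V N) :
    ft (tensorPow g N) ξ = ∏ i, ft1 g (ξ i) := by
  simp only [ft, ft1]
  rw [← MeasureTheory.integral_fintype_prod_eq_prod
    (f := fun (i : Fin N) (v : ℝ) => (g v : ℂ) * Complex.exp (-Complex.I * ((v * ξ i : ℝ) : ℂ)))]
  congr 1
  ext v
  rw [Finset.prod_mul_distrib, tensorPow, ← Complex.exp_sum]
  congr 1
  · push_cast
    rfl
  · push_cast [Finset.mul_sum]
    rfl

lemma aux_prod_sub_prod {ι : Type*} (s : Finset ι) (a b : ι → ℂ)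
    (ha : ∀ i, ‖a i‖ ≤ 1) (hb : ∀ i, ‖b i‖ ≤ 1) :
    ‖(∏ i ∈ s, a i) - ∏ i ∈ s, b i‖ ≤ ∑ i ∈ s, ‖a i - b i‖ := by
  induction s using Finset.cons_induction with
  | empty => simp
  | cons i s his ih =>
    rw [Finset.prod_cons, Finset.prod_cons, Finset.sum_cons]
    have hsplit : a i * ∏ j ∈ s, a j - b i * ∏ j ∈ s, b j
        = (a i - b i) * ∏ j ∈ s, a j + b i * ((∏ j ∈ s, a j) - ∏ j ∈ s, b j) := by ring
    rw [hsplit]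
    have h1 : ‖∏ j ∈ s, a j‖ ≤ 1 := by
      rw [norm_prod]
      exact Finset.prod_le_one (fun j _ => norm_nonneg _) (fun j _ => ha j)
    have A := norm_add_le ((a i - b i) * ∏ j ∈ s, a j)
      (b i * ((∏ j ∈ s, a j) - ∏ j ∈ s, b j))
    rw [norm_mul, norm_mul] at A
    have h2 : ‖b i‖ * ‖(∏ j ∈ s, a j) - ∏ j ∈ s, b j‖ ≤ 1 * ∑ j ∈ s, ‖a j - b j‖ :=
      mul_le_mul (hb i) ih (norm_nonneg _) zero_le_one
    have h3 : ‖a i - b i‖ * ‖∏ j ∈ s, a j‖ ≤ ‖a i - b i‖ * 1 :=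
      mul_le_mul_of_nonneg_left h1 (norm_nonneg _)
    linarith

lemma aux_ft1_hasDerivAt {g : ℝ → ℝ} (hg : IsProbDensity1 g)
    (hg1 : Integrable fun x => x * g x) :
    HasDerivAt (ft1 g) (-Complex.I * ((∫ x, x * g x : ℝ) : ℂ)) 0 := by
  have main := hasDerivAt_integral_of_dominated_loc_of_deriv_le (μ := volume) (x₀ := (0 : ℝ))
    (F := fun (s : ℝ) (v : ℝ) => (g v : ℂ) * Complex.exp (-Complex.I * ((v * s : ℝ) : ℂ)))
    (F' := fun (s : ℝ) (v : ℝ) =>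
      (g v : ℂ) * (-Complex.I * (v : ℂ) * Complex.exp (-Complex.I * ((v * s : ℝ) : ℂ))))
    (bound := fun v => |v * g v|) Filter.univ_mem
    (Filter.Eventually.of_forall fun s =>
      ((Complex.continuous_ofReal.comp_aestronglyMeasurable
        hg.2.1.aestronglyMeasurable).mul (Continuous.aestronglyMeasurable (by continuity))))
    (aux_ft1_integrand_integrable hg 0)
    ((Complex.continuous_ofReal.comp_aestronglyMeasurable
        hg.2.1.aestronglyMeasurable).mul (Continuous.aestronglyMeasurable (by continuity)))
    (Filter.Eventually.of_forall fun v => fun s _ => by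
      have hnorm : ‖(g v : ℂ) *
          (-Complex.I * (v : ℂ) * Complex.exp (-Complex.I * ((v * s : ℝ) : ℂ)))‖
          = g v * |v| := by
        rw [norm_mul, norm_mul, aux_norm_exp, mul_one, norm_mul, norm_neg, Complex.norm_I,
          one_mul, Complex.norm_real, Real.norm_eq_abs, abs_of_nonneg (hg.1 v),
          Complex.norm_real, Real.norm_eq_abs]
      rw [hnorm, abs_mul, abs_of_nonneg (hg.1 v)]
      exact le_of_eq (mul_comm _ _))
    hg1.abs
    (Filter.Eventually.of_forall fun v => fun s _ => by
      have heq : (fun s : ℝ => (g v : ℂ) * Complex.exp (-Complex.I * ((v * s : ℝ) : ℂ)))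
          = fun s : ℝ => (g v : ℂ) * Complex.exp (-Complex.I * (v : ℂ) * (s : ℂ)) := by
        funext t
        push_cast
        ring_nf
      rw [heq]
      have hinner : HasDerivAt (fun s : ℝ => -Complex.I * (v : ℂ) * (s : ℂ))
          (-Complex.I * (v : ℂ)) s := by
        simpa using (Complex.ofRealCLM.hasDerivAt (x := s)).const_mul (-Complex.I * (v : ℂ))
      have := (hinner.cexp).const_mul ((g v : ℂ))
      convert this using 1
      · rfl
      · push_cast
        ring_nf)
  have hval : (∫ v : ℝ, (g v : ℂ) *
      (-Complex.I * (v : ℂ) * Complex.exp (-Complex.I * ((v * (0 : ℝ) : ℝ) : ℂ))))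
      = -Complex.I * ((∫ x, x * g x : ℝ) : ℂ) := by
    have : ∀ v : ℝ, (g v : ℂ) *
        (-Complex.I * (v : ℂ) * Complex.exp (-Complex.I * ((v * (0 : ℝ) : ℝ) : ℂ)))
        = -Complex.I * ((v * g v : ℝ) : ℂ) := by
      intro v
      push_cast
      simp [Complex.exp_zero]
      ring
    simp_rw [this]
    rw [MeasureTheory.integral_const_mul]
    congr 1
    exact integral_ofReal
  exact hval ▸ main.2

theorem statement_17 (f h : ℝ → ℝ) (hf : IsProbDensity1 f) (hh : IsProbDensity1 h)
    (hf1 : Integrable (fun x => x * f x)) (hh1 : Integrable (fun x => x * h x))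
    (N : ℕ) (hN : 1 ≤ N) :
    dT1 (tensorPow f N) (tensorPow h N) ≤ Real.sqrt N * dT11 f h ∧
      Real.sqrt N * |(∫ x, x * f x) - ∫ x, x * h x| ≤
        dT1 (tensorPow f N) (tensorPow h N) := by
  haveI hne1 : Nonempty {ξ : ℝ // ξ ≠ 0} := ⟨⟨1, one_ne_zero⟩⟩
  have hξone : (fun _ : Fin N => (1 : ℝ)) ≠ 0 := by
    intro hcontra
    have := congrFun hcontra ⟨0, hN⟩
    simp at this
  haveI hneN : Nonempty {ξ : V N // ξ ≠ 0} := ⟨⟨fun _ => 1, hξone⟩⟩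
  set M : ℝ := (∫ x, |x * f x|) + ∫ x, |x * h x| with hM
  have hlip : ∀ ξ : ℝ, ‖ft1 f ξ - ft1 h ξ‖ ≤ M * |ξ| := by
    intro ξ
    have h1 := aux_ft1_sub_one hf hf1 ξ
    have h2 := aux_ft1_sub_one hh hh1 ξ
    calc ‖ft1 f ξ - ft1 h ξ‖ = ‖(ft1 f ξ - 1) - (ft1 h ξ - 1)‖ := by ring_nf
      _ ≤ ‖ft1 f ξ - 1‖ + ‖ft1 h ξ - 1‖ := norm_sub_le _ _
      _ ≤ M * |ξ| := by rw [hM, add_mul]; exact add_le_add h1 h2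
  have hbdd1 : BddAbove (Set.range fun ξ : {ξ : ℝ // ξ ≠ 0} =>
      ‖ft1 f ξ.1 - ft1 h ξ.1‖ / |ξ.1|) := by
    refine ⟨M, ?_⟩
    rintro x ⟨ξ, rfl⟩
    rw [div_le_iff₀ (abs_pos.2 ξ.2)]
    exact hlip ξ.1
  have hd11nonneg : 0 ≤ dT11 f h :=
    Real.iSup_nonneg fun ξ => div_nonneg (norm_nonneg _) (abs_nonneg _)
  have hle_d11 : ∀ ξ : ℝ, ‖ft1 f ξ - ft1 h ξ‖ ≤ dT11 f h * |ξ| := by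
    intro ξ
    by_cases hz : ξ = 0
    · subst hz
      rw [aux_ft1_zero hf, aux_ft1_zero hh]
      simp
    · have hterm : ‖ft1 f ξ - ft1 h ξ‖ / |ξ| ≤ dT11 f h := le_ciSup hbdd1 ⟨ξ, hz⟩
      rw [div_le_iff₀ (abs_pos.2 hz)] at hterm
      exact hterm
  have key : ∀ ξ : V N, ξ ≠ 0 →
      ‖ft (tensorPow f N) ξ - ft (tensorPow h N) ξ‖ / Real.sqrt (∑ i, ξ i ^ 2)
        ≤ Real.sqrt N * dT11 f h := by
    intro ξ hξ
    obtain ⟨i0, hi0⟩ := Function.ne_iff.1 hξ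
    have hi0' : ξ i0 ≠ 0 := by simpa using hi0
    have hpos : 0 < ∑ i, ξ i ^ 2 :=
      Finset.sum_pos' (fun i _ => sq_nonneg _)
        ⟨i0, Finset.mem_univ _, by rw [← sq_abs]; exact pow_pos (abs_pos.2 hi0') 2⟩
    have hSpos : 0 < Real.sqrt (∑ i, ξ i ^ 2) := Real.sqrt_pos.2 hpos
    have step1 : ‖ft (tensorPow f N) ξ - ft (tensorPow h N) ξ‖
        ≤ ∑ i, ‖ft1 f (ξ i) - ft1 h (ξ i)‖ := by
      rw [aux_ft_tensorPow, aux_ft_tensorPow]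
      exact aux_prod_sub_prod Finset.univ _ _ (fun i => aux_norm_ft1_le_one hf _)
        (fun i => aux_norm_ft1_le_one hh _)
    have step2 : ∑ i, ‖ft1 f (ξ i) - ft1 h (ξ i)‖ ≤ dT11 f h * ∑ i, |ξ i| := by
      rw [Finset.mul_sum]
      exact Finset.sum_le_sum fun i _ => hle_d11 (ξ i)
    have step3 : ∑ i, |ξ i| ≤ Real.sqrt N * Real.sqrt (∑ i, ξ i ^ 2) := by
      have h4 : (∑ i, |ξ i|) ^ 2 ≤ (N : ℝ) * ∑ i, ξ i ^ 2 := by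
        have h5 := sq_sum_le_card_mul_sum_sq (s := (Finset.univ : Finset (Fin N)))
          (f := fun i => |ξ i|)
        simpa [sq_abs, Finset.card_univ] using h5
      calc ∑ i, |ξ i| = Real.sqrt ((∑ i, |ξ i|) ^ 2) :=
            (Real.sqrt_sq (Finset.sum_nonneg fun i _ => abs_nonneg _)).symm
        _ ≤ Real.sqrt ((N : ℝ) * ∑ i, ξ i ^ 2) := Real.sqrt_le_sqrt h4
        _ = Real.sqrt N * Real.sqrt (∑ i, ξ i ^ 2) := Real.sqrt_mul (by positivity) _
    rw [div_le_iff₀ hSpos]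
    calc ‖ft (tensorPow f N) ξ - ft (tensorPow h N) ξ‖
        ≤ dT11 f h * ∑ i, |ξ i| := step1.trans step2
      _ ≤ dT11 f h * (Real.sqrt N * Real.sqrt (∑ i, ξ i ^ 2)) :=
          mul_le_mul_of_nonneg_left step3 hd11nonneg
      _ = Real.sqrt N * dT11 f h * Real.sqrt (∑ i, ξ i ^ 2) := by ring
  have hbddN : BddAbove (Set.range fun ξ : {ξ : V N // ξ ≠ 0} =>
      ‖ft (tensorPow f N) ξ.1 - ft (tensorPow h N) ξ.1‖ / Real.sqrt (∑ i, (ξ.1 i) ^ 2)) :=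
    ⟨Real.sqrt N * dT11 f h, by rintro x ⟨ξ, rfl⟩; exact key ξ.1 ξ.2⟩
  constructor
  · exact ciSup_le fun ξ => key ξ.1 ξ.2
  · set mf := ∫ x, x * f x with hmf
    set mh := ∫ x, x * h x with hmh
    have hdf := aux_ft1_hasDerivAt hf hf1
    have hdh := aux_ft1_hasDerivAt hh hh1
    have hδ : HasDerivAt (fun s => ft1 f s - ft1 h s)
        (-Complex.I * ((mf - mh : ℝ) : ℂ)) 0 := by
      have h6 := hdf.sub hdh
      convert h6 using 1
      · rfl
      · rfl
      · rw [hmf, hmh]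
        push_cast
        ring
    have hδ0 : ft1 f 0 - ft1 h 0 = 0 := by
      rw [aux_ft1_zero hf, aux_ft1_zero hh, sub_self]
    have hslope : Filter.Tendsto (fun s : ℝ => ((s : ℂ))⁻¹ * (ft1 f s - ft1 h s)) (𝓝[≠] 0)
        (𝓝 (-Complex.I * ((mf - mh : ℝ) : ℂ))) := by
      have h1 := hasDerivAt_iff_tendsto_slope.mp hδ
      refine h1.congr' ?_
      filter_upwards [self_mem_nhdsWithin] with s hs
      have : slope (fun s => ft1 f s - ft1 h s) 0 s
          = (s - 0)⁻¹ • ((ft1 f s - ft1 h s) - (ft1 f 0 - ft1 h 0)) := rfl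
      rw [this, hδ0, sub_zero, sub_zero, Complex.real_smul, Complex.ofReal_inv]
    have hcontf : Filter.Tendsto (ft1 f) (𝓝[≠] (0 : ℝ)) (𝓝 1) := by
      have h7 := hdf.continuousAt.tendsto
      rw [aux_ft1_zero hf] at h7
      exact h7.mono_left nhdsWithin_le_nhds
    have hconth : Filter.Tendsto (ft1 h) (𝓝[≠] (0 : ℝ)) (𝓝 1) := by
      have h7 := hdh.continuousAt.tendsto
      rw [aux_ft1_zero hh] at h7
      exact h7.mono_left nhdsWithin_le_nhds
    have hsum : Filter.Tendsto
        (fun s => ∑ k ∈ Finset.range N, ft1 f s ^ k * ft1 h s ^ (N - 1 - k))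
        (𝓝[≠] (0 : ℝ)) (𝓝 (N : ℂ)) := by
      have h8 : Filter.Tendsto
          (fun s => ∑ k ∈ Finset.range N, ft1 f s ^ k * ft1 h s ^ (N - 1 - k))
          (𝓝[≠] (0 : ℝ)) (𝓝 (∑ k ∈ Finset.range N, (1 : ℂ) ^ k * (1 : ℂ) ^ (N - 1 - k))) :=
        tendsto_finset_sum _ fun k _ => (hcontf.pow k).mul (hconth.pow _)
      simpa using h8
    have hprod : Filter.Tendsto
        (fun s : ℝ => ((s : ℂ))⁻¹ * (ft1 f s ^ N - ft1 h s ^ N)) (𝓝[≠] (0 : ℝ))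
        (𝓝 ((N : ℂ) * (-Complex.I * ((mf - mh : ℝ) : ℂ)))) := by
      refine (hsum.mul hslope).congr fun s => ?_
      rw [show (∑ k ∈ Finset.range N, ft1 f s ^ k * ft1 h s ^ (N - 1 - k)) *
          (((s : ℂ))⁻¹ * (ft1 f s - ft1 h s))
          = ((s : ℂ))⁻¹ * ((∑ k ∈ Finset.range N, ft1 f s ^ k * ft1 h s ^ (N - 1 - k)) *
            (ft1 f s - ft1 h s)) by ring, geom_sum₂_mul]
    have hG : Filter.Tendsto
        (fun s : ℝ => ‖((s : ℂ))⁻¹ * (ft1 f s ^ N - ft1 h s ^ N)‖ / Real.sqrt N)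
        (𝓝[≠] (0 : ℝ)) (𝓝 (Real.sqrt N * |mf - mh|)) := by
      have h3 := (hprod.norm).div_const (Real.sqrt N)
      have h9 : ‖(N : ℂ) * (-Complex.I * ((mf - mh : ℝ) : ℂ))‖ / Real.sqrt N
          = Real.sqrt N * |mf - mh| := by
        rw [norm_mul, norm_mul, norm_neg, Complex.norm_I, one_mul, Complex.norm_real,
          Real.norm_eq_abs, Complex.norm_natCast]
        rw [show (N : ℝ) * |mf - mh| / Real.sqrt N = (N : ℝ) / Real.sqrt N * |mf - mh| by ring,
          Real.div_sqrt]
      rwa [h9] at h3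
    refine le_of_tendsto hG ?_
    filter_upwards [self_mem_nhdsWithin] with s hs
    have hsne : s ≠ 0 := hs
    have hξs : (fun _ : Fin N => s) ≠ 0 := fun hc => hsne (congrFun hc ⟨0, hN⟩)
    have hterm : ‖ft (tensorPow f N) (fun _ => s) - ft (tensorPow h N) (fun _ => s)‖ /
        Real.sqrt (∑ i : Fin N, s ^ 2) ≤ dT1 (tensorPow f N) (tensorPow h N) :=
      le_ciSup hbddN ⟨fun _ => s, hξs⟩
    have e1 : ft (tensorPow f N) (fun _ => s) = ft1 f s ^ N := by
      rw [aux_ft_tensorPow]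
      simp
    have e2 : ft (tensorPow h N) (fun _ => s) = ft1 h s ^ N := by
      rw [aux_ft_tensorPow]
      simp
    have e3 : Real.sqrt (∑ _i : Fin N, s ^ 2) = Real.sqrt N * |s| := by
      rw [Finset.sum_const, Finset.card_univ, Fintype.card_fin, nsmul_eq_mul,
        Real.sqrt_mul (by positivity), Real.sqrt_sq_eq_abs]
    have e4 : ‖((s : ℂ))⁻¹ * (ft1 f s ^ N - ft1 h s ^ N)‖ / Real.sqrt N
        = ‖ft1 f s ^ N - ft1 h s ^ N‖ / (Real.sqrt N * |s|) := by
      rw [norm_mul, norm_inv, Complex.norm_real, Real.norm_eq_abs, inv_mul_eq_div,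
        div_div, mul_comm |s| (Real.sqrt N)]
    rw [e4]
    rw [e1, e2, e3] at hterm
    exact hterm


end
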